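/- Let G be a finite graph. G has a tree-decomposition in which every part induces a clique if and only if G is chordal. -/

import Mathlib

/-- A graph is chordal if it has no induced cycle of length at least 4, i.e. no graph
embedding (which is automatically induced) of a cycle graph of length `≥ 4`. -/
def IsChordal {V : Type*} (G : SimpleGraph V) : Prop :=
  ∀ n : ℕ, 4 ≤ n → IsEmpty (SimpleGraph.cycleGraph n ↪g G)

/-- A tree-decomposition of `G` with parts `bags : ι → Set V` over a tree `T`. -/
def IsTreeDecomposition {V ι : Type*} (G : SimpleGraph V) (T : SimpleGraph ι)
    (bags : ι → Set V) : Prop :=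
  T.IsTree ∧
  (∀ v : V, ∃ i, v ∈ bags i) ∧
  (∀ u v : V, G.Adj u v → ∃ i, u ∈ bags i ∧ v ∈ bags i) ∧
  (∀ v : V, (T.induce {i | v ∈ bags i}).Connected)

open SimpleGraph

namespace ChordalAux

section General

variable {V : Type*} {G : SimpleGraph V}



@[simp] lemma getVert_nil (u : V) (i : ℕ) : (Walk.nil : G.Walk u u).getVert i = u :=
  Walk.getVert_of_length_le _ (by simp)

/-- `take` for walks. -/
def wtake {u v : V} : (p : G.Walk u v) → (n : ℕ) → G.Walk u (p.getVert n)
  | p, 0 => Walk.nil.copy rfl (p.getVert_zero).symm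
  | Walk.nil, (n+1) => Walk.nil.copy rfl
      (Walk.getVert_of_length_le _ (by simp)).symm
  | Walk.cons h q, (n+1) => (Walk.cons h (wtake q n)).copy rfl
      (q.getVert_cons_succ h).symm

lemma length_wtake {u v : V} (p : G.Walk u v) (n : ℕ) :
    (wtake p n).length = min n p.length := by
  induction p generalizing n with
  | nil => cases n <;> simp [wtake]
  | cons h q ih =>
    cases n with
    | zero => simp [wtake]
    | succ n => simp [wtake, ih, Nat.succ_min_succ]

lemma support_wtake {u v : V} (p : G.Walk u v) (n : ℕ) :
    ∀ w ∈ (wtake p n).support, w ∈ p.support := by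
  induction p generalizing n with
  | nil => cases n <;> simp [wtake]
  | cons h q ih =>
    cases n with
    | zero => simp [wtake]
    | succ n =>
      intro w hw
      simp only [wtake, Walk.support_copy, Walk.support_cons, List.mem_cons] at hw
      rcases hw with rfl | hw
      · simp
      · simp [ih n w hw]

lemma length_drop {u v : V} (p : G.Walk u v) (n : ℕ) :
    (p.drop n).length = p.length - n := by
  induction p generalizing n with
  | nil => cases n <;> simp [Walk.drop]
  | cons h q ih =>
    cases n with
    | zero => simp [Walk.drop]
    | succ n => simpa [Walk.drop] using ih n

lemma support_drop {u v : V} (p : G.Walk u v) (n : ℕ) :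
    ∀ w ∈ (p.drop n).support, w ∈ p.support := by
  induction p generalizing n with
  | nil => cases n <;> simp [Walk.drop]
  | cons h q ih =>
    cases n with
    | zero => simp [Walk.drop]
    | succ n =>
      intro w hw
      simp only [Walk.drop, Walk.support_copy] at hw
      simp [ih n w hw]

lemma exists_shorter_of_eq {u v : V} (p : G.Walk u v) {i j : ℕ} (hij : i < j)
    (hj : j ≤ p.length) (h : p.getVert i = p.getVert j) :
    ∃ q : G.Walk u v, q.length < p.length ∧ ∀ w ∈ q.support, w ∈ p.support := by
  refine ⟨(wtake p i).append ((p.drop j).copy h.symm rfl), ?_, ?_⟩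
  · rw [Walk.length_append, Walk.length_copy, length_wtake, length_drop]
    omega
  · intro w hw
    rw [Walk.mem_support_append_iff] at hw
    rcases hw with hw | hw
    · exact support_wtake p i w hw
    · rw [Walk.support_copy] at hw
      exact support_drop p j w hw

lemma exists_shorter_of_adj {u v : V} (p : G.Walk u v) {i j : ℕ} (hij : i + 1 < j)
    (hj : j ≤ p.length) (h : G.Adj (p.getVert i) (p.getVert j)) :
    ∃ q : G.Walk u v, q.length < p.length ∧ ∀ w ∈ q.support, w ∈ p.support := by
  refine ⟨(wtake p i).append (Walk.cons h (p.drop j)), ?_, ?_⟩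
  · rw [Walk.length_append, Walk.length_cons, length_wtake, length_drop]
    omega
  · intro w hw
    rw [Walk.mem_support_append_iff] at hw
    rcases hw with hw | hw
    · exact support_wtake p i w hw
    · rw [Walk.support_cons, List.mem_cons] at hw
      rcases hw with rfl | hw
      · exact Walk.mem_support_iff_exists_getVert.2 ⟨i, rfl, by omega⟩
      · exact support_drop p j w hw

/-- A minimal-length walk in a support-monotone family is injective and chord-free. -/
lemma exists_min_walk {x y : V} (P : G.Walk x y → Prop)
    (hmono : ∀ p q : G.Walk x y, P p → (∀ w ∈ q.support, w ∈ p.support) →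
      q.length < p.length → P q)
    (hne : ∃ p, P p) :
    ∃ p : G.Walk x y, P p ∧
      (∀ i j : ℕ, i < j → j ≤ p.length → p.getVert i ≠ p.getVert j) ∧
      (∀ i j : ℕ, i + 1 < j → j ≤ p.length → ¬ G.Adj (p.getVert i) (p.getVert j)) := by
  classical
  obtain ⟨p₀, hp₀⟩ := hne
  set Q : ℕ → Prop := fun m => ∃ p : G.Walk x y, P p ∧ p.length = m with hQdef
  have hex : ∃ m, Q m := ⟨p₀.length, p₀, hp₀, rfl⟩
  obtain ⟨p, hp, hplen⟩ := Nat.find_spec hex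
  refine ⟨p, hp, ?_, ?_⟩
  · intro i j hij hj h
    obtain ⟨q, hq1, hq2⟩ := exists_shorter_of_eq p hij hj h
    have := Nat.find_min' hex (show Q q.length from ⟨q, hmono p q hp hq2 hq1, rfl⟩)
    omega
  · intro i j hij hj h
    obtain ⟨q, hq1, hq2⟩ := exists_shorter_of_adj p hij hj h
    have := Nat.find_min' hex (show Q q.length from ⟨q, hmono p q hp hq2 hq1, rfl⟩)
    omega

lemma path_getVert_inj {u v : V} {p : G.Walk u v} (hp : p.IsPath) :
    ∀ {i j : ℕ}, i ≤ p.length → j ≤ p.length → p.getVert i = p.getVert j → i = j := by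
  induction p with
  | nil =>
    intro i j hi hj _
    simp only [Walk.length_nil, Nat.le_zero] at hi hj
    omega
  | cons h q ih =>
    intro i j hi hj hgv
    rw [Walk.cons_isPath_iff] at hp
    match i, j with
    | 0, 0 => rfl
    | 0, (j+1) =>
      rw [Walk.getVert_zero, Walk.getVert_cons_succ] at hgv
      exact absurd (Walk.mem_support_iff_exists_getVert.2 ⟨j, hgv.symm, by
        simp only [Walk.length_cons] at hj; omega⟩) hp.2
    | (i+1), 0 =>
      rw [Walk.getVert_zero, Walk.getVert_cons_succ] at hgv
      exact absurd (Walk.mem_support_iff_exists_getVert.2 ⟨i, hgv, by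
        simp only [Walk.length_cons] at hi; omega⟩) hp.2
    | (i+1), (j+1) =>
      rw [Walk.getVert_cons_succ, Walk.getVert_cons_succ] at hgv
      have := ih hp.1 (by simp only [Walk.length_cons] at hi; omega)
        (by simp only [Walk.length_cons] at hj; omega) hgv
      omega

/-- Fin-cycle adjacency characterization. -/
lemma cycleGraph_adj_iff {n : ℕ} [NeZero n] (hn : 4 ≤ n) (a b : Fin n) :
    (cycleGraph n).Adj a b ↔ (b = a + 1 ∨ a = b + 1) := by
  rw [SimpleGraph.cycleGraph_adj']
  have h1 : ((1 : Fin n) : ℕ) = 1 := by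
    rw [Fin.val_one']
    exact Nat.mod_eq_of_lt (by omega)
  constructor
  · rintro (h | h)
    · right
      have h2 : a - b = 1 := by
        apply Fin.ext
        rw [h1]
        exact h
      rw [sub_eq_iff_eq_add] at h2
      rw [h2, add_comm]
    · left
      have h2 : b - a = 1 := by
        apply Fin.ext
        rw [h1]
        exact h
      rw [sub_eq_iff_eq_add] at h2
      rw [h2, add_comm]
  · rintro (rfl | rfl)
    · right
      rw [add_sub_cancel_left, h1]
    · left
      rw [add_sub_cancel_left, h1]





/-- A simplicial vertex. -/
def Simpl (G : SimpleGraph V) (v : V) : Prop :=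
  ∀ a b, G.Adj v a → G.Adj v b → a = b ∨ G.Adj a b

lemma not_chordal_of_cycleFn {n : ℕ} [NeZero n] (hn : 4 ≤ n) (f : Fin n → V)
    (hinj : Function.Injective f)
    (hadj : ∀ i : Fin n, G.Adj (f i) (f (i + 1)))
    (hchord : ∀ i j : Fin n, G.Adj (f i) (f j) → (j = i + 1 ∨ i = j + 1)) :
    ¬ IsChordal G := by
  intro hc
  refine (hc n hn).false ⟨⟨f, hinj⟩, ?_⟩
  intro a b
  simp only [Function.Embedding.coeFn_mk]
  rw [cycleGraph_adj_iff hn]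
  constructor
  · exact hchord a b
  · rintro (rfl | rfl)
    · exact hadj a
    · exact (hadj b).symm

lemma IsChordal.induce (h : IsChordal G) (s : Set V) : IsChordal (G.induce s) :=
  fun n hn => ⟨fun e => (h n hn).false ((Embedding.induce s).comp e)⟩

lemma induce_adj_iff {s : Set V} (u v : s) : (G.induce s).Adj u v ↔ G.Adj u v :=
  (Embedding.induce s).map_rel_iff.symm.trans Iff.rfl





lemma cycle_assembly {x y : V} {A B : Set V}
    (hAB : ∀ v, v ∈ A → v ∈ B → False)
    (hsepAB : ∀ u v, u ∈ A → v ∈ B → ¬ G.Adj u v)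
    (p : G.Walk x y) (q : G.Walk y x)
    (hpinj : ∀ i j : ℕ, i < j → j ≤ p.length → p.getVert i ≠ p.getVert j)
    (hqinj : ∀ i j : ℕ, i < j → j ≤ q.length → q.getVert i ≠ q.getVert j)
    (hpchord : ∀ i j : ℕ, i + 1 < j → j ≤ p.length → ¬ G.Adj (p.getVert i) (p.getVert j))
    (hqchord : ∀ i j : ℕ, i + 1 < j → j ≤ q.length → ¬ G.Adj (q.getVert i) (q.getVert j))
    (hpint : ∀ k : ℕ, 0 < k → k < p.length → p.getVert k ∈ A)
    (hqint : ∀ k : ℕ, 0 < k → k < q.length → q.getVert k ∈ B)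
    (hp2 : 2 ≤ p.length) (hq2 : 2 ≤ q.length) : ¬ IsChordal G := by
  set lp := p.length with hlp
  set lq := q.length with hlq
  set n := lp + lq with hn'
  haveI : NeZero n := ⟨by omega⟩
  have hn : 4 ≤ n := by omega
  have hqx : q.getVert lq = x := Walk.getVert_length q
  have hpy : p.getVert lp = y := Walk.getVert_length p
  have h1v : ((1 : Fin n) : ℕ) = 1 := by
    rw [Fin.val_one']
    exact Nat.mod_eq_of_lt (by omega)
  set f : Fin n → V := fun i => if i.val < lp then p.getVert i.val else q.getVert (i.val - lp)
    with hfdef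
  have hfP : ∀ i : Fin n, i.val ≤ lp → f i = p.getVert i.val := by
    intro i hi
    rcases lt_or_eq_of_le hi with h | h
    · rw [hfdef]
      exact if_pos h
    · rw [hfdef]
      simp only
      rw [if_neg (by omega), h, Nat.sub_self, Walk.getVert_zero]
      exact hpy.symm
  have hfQ : ∀ i : Fin n, lp ≤ i.val → f i = q.getVert (i.val - lp) := by
    intro i hi
    rw [hfdef]
    exact if_neg (by omega)
  have hf0 : ∀ i : Fin n, i.val = 0 → f i = q.getVert lq := by
    intro i hi
    rw [hfP i (by omega), hi, Walk.getVert_zero, hqx]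
  have hinj2 : ∀ i j : Fin n, i.val < j.val → f i ≠ f j := by
    intro i j hij he
    have hjn : j.val < n := j.isLt
    by_cases hj : j.val ≤ lp
    · rw [hfP i (by omega), hfP j hj] at he
      exact hpinj i.val j.val hij hj he
    · by_cases hi : lp ≤ i.val
      · rw [hfQ i hi, hfQ j (by omega)] at he
        exact hqinj (i.val - lp) (j.val - lp) (by omega) (by omega) he
      · push_neg at hj hi
        rw [hfP i (by omega), hfQ j (by omega)] at he
        have hjint : q.getVert (j.val - lp) ∈ B := hqint (j.val - lp) (by omega) (by omega)
        by_cases hi0 : i.val = 0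
        · rw [hi0, Walk.getVert_zero] at he
          exact hqinj (j.val - lp) lq (by omega) le_rfl (he.symm.trans hqx.symm)
        · have hiint : p.getVert i.val ∈ A := hpint i.val (by omega) (by omega)
          rw [he] at hiint
          exact hAB _ hiint hjint
  have hinj : Function.Injective f := by
    intro i j he
    rcases lt_trichotomy i.val j.val with h | h | h
    · exact absurd he (hinj2 i j h)
    · exact Fin.ext h
    · exact absurd he.symm (hinj2 j i h)
  have hsucc : ∀ i : Fin n, ((i + 1 : Fin n)).val = (i.val + 1) % n := by
    intro i
    rw [Fin.val_add, h1v]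
  have hadjf : ∀ i : Fin n, G.Adj (f i) (f (i + 1)) := by
    intro i
    have hiv : i.val < n := i.isLt
    by_cases hlast : i.val + 1 = n
    · have h0 : ((i + 1 : Fin n)).val = 0 := by rw [hsucc, hlast, Nat.mod_self]
      rw [hf0 _ h0, hfQ i (by omega)]
      have hq := q.adj_getVert_succ (i := lq - 1) (by omega)
      rw [show lq - 1 + 1 = lq by omega] at hq
      rw [show i.val - lp = lq - 1 by omega]
      exact hq
    · have h1 : ((i + 1 : Fin n)).val = i.val + 1 := by
        rw [hsucc]
        exact Nat.mod_eq_of_lt (by omega)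
      by_cases hP : i.val + 1 ≤ lp
      · rw [hfP i (by omega), hfP (i + 1) (by rw [h1]; exact hP), h1]
        exact p.adj_getVert_succ (by omega)
      · rw [hfQ i (by omega), hfQ (i + 1) (by omega), h1]
        rw [show i.val + 1 - lp = (i.val - lp) + 1 by omega]
        exact q.adj_getVert_succ (by omega)
  have hchordf : ∀ i j : Fin n, G.Adj (f i) (f j) → (j = i + 1 ∨ i = j + 1) := by
    have hmain : ∀ i j : Fin n, i.val < j.val → G.Adj (f i) (f j) →
        (j = i + 1 ∨ i = j + 1) := by
      intro i j hij hadj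
      have hjn : j.val < n := j.isLt
      by_cases hj : j.val ≤ lp
      · rw [hfP i (by omega), hfP j hj] at hadj
        have hjv : j.val = i.val + 1 := by
          by_contra hne
          exact hpchord i.val j.val (by omega) hj hadj
        left
        apply Fin.ext
        rw [hsucc, Nat.mod_eq_of_lt (by omega), hjv]
      · by_cases hi : lp ≤ i.val
        · rw [hfQ i hi, hfQ j (by omega)] at hadj
          have hjv : j.val - lp = (i.val - lp) + 1 := by
            by_contra hne
            exact hqchord (i.val - lp) (j.val - lp) (by omega) (by omega) hadj
          left
          apply Fin.ext
          rw [hsucc, Nat.mod_eq_of_lt (by omega)]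
          omega
        · push_neg at hj hi
          by_cases hi0 : i.val = 0
          · rw [hf0 i hi0, hfQ j (by omega)] at hadj
            have hjv : lq = (j.val - lp) + 1 := by
              by_contra hne
              exact hqchord (j.val - lp) lq (by omega) le_rfl hadj.symm
            right
            apply Fin.ext
            rw [hsucc, hi0]
            have hj' : j.val = n - 1 := by omega
            rw [hj', show n - 1 + 1 = n by omega, Nat.mod_self]
          · rw [hfP i (by omega), hfQ j (by omega)] at hadj
            have hiint : p.getVert i.val ∈ A := hpint i.val (by omega) (by omega)
            have hjint : q.getVert (j.val - lp) ∈ B :=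
              hqint (j.val - lp) (by omega) (by omega)
            exact absurd hadj (hsepAB _ _ hiint hjint)
    intro i j hadj
    rcases lt_trichotomy i.val j.val with h | h | h
    · exact hmain i j h hadj
    · exact absurd hadj (by rw [Fin.ext h]; exact G.loopless.irrefl _)
    · rcases hmain j i h hadj.symm with hh | hh
      · exact Or.inr hh
      · exact Or.inl hh
  exact not_chordal_of_cycleFn hn f hinj hadjf hchordf


end General




lemma exists_two_simplicial : ∀ (n : ℕ) (V : Type) [Fintype V] (G : SimpleGraph V),
    Fintype.card V ≤ n → IsChordal G →
    ∀ a b : V, a ≠ b → ¬ G.Adj a b →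
    ∃ x y, Simpl G x ∧ Simpl G y ∧ x ≠ y ∧ ¬ G.Adj x y := by
  intro n
  induction n with
  | zero =>
    intro V _ G hcard _ a
    haveI : IsEmpty V := Fintype.card_eq_zero_iff.1 (Nat.le_zero.1 hcard)
    exact isEmptyElim a
  | succ n ih =>
    intro V _ G hcard hch a b hab hnadj
    classical
    set Sep : Finset V → Prop := fun s => a ∉ s ∧ b ∉ s ∧
      ¬ ∃ p : G.Walk a b, ∀ w ∈ p.support, w ∉ s with hSep
    have hSep0 : Sep ({a, b}ᶜ : Finset V) := by
      refine ⟨by simp, by simp, ?_⟩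
      rintro ⟨p, hp⟩
      have hsub : ∀ w ∈ p.support, w = a ∨ w = b := by
        intro w hw
        have := hp w hw
        simp only [Finset.mem_compl, Finset.mem_insert, Finset.mem_singleton, not_not] at this
        exact this
      have hlen : 0 < p.length := by
        rcases Nat.eq_zero_or_pos p.length with h | h
        · exact absurd (Walk.exists_length_eq_zero_iff.1 ⟨p, h⟩) hab
        · exact h
      have hadj1 : G.Adj a (p.getVert 1) := by
        have := p.adj_getVert_succ (i := 0) hlen
        rwa [Walk.getVert_zero] at this
      rcases hsub (p.getVert 1)
          (Walk.mem_support_iff_exists_getVert.2 ⟨1, rfl, by omega⟩) with h | h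
      · rw [h] at hadj1
        exact hadj1.ne rfl
      · rw [h] at hadj1
        exact hnadj hadj1
    obtain ⟨S₀, hS₀Sep, hS₀min⟩ : ∃ S₀ ∈ {s : Finset V | Sep s},
        ∀ s ∈ {s : Finset V | Sep s}, id s ≤ id S₀ → id S₀ = id s := by
      obtain ⟨S, hS⟩ := exists_minimal_of_wellFoundedLT (fun s : Finset V => Sep s) ⟨_, hSep0⟩
      exact ⟨S, hS.prop, fun s hs hle => (hS.eq_of_le hs hle).symm⟩
    simp only [Set.mem_setOf_eq, id] at hS₀Sep hS₀min
    have hSa : a ∉ S₀ := hS₀Sep.1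
    have hSb : b ∉ S₀ := hS₀Sep.2.1
    have hSsep : ¬ ∃ p : G.Walk a b, ∀ w ∈ p.support, w ∉ S₀ := hS₀Sep.2.2
    set R : V → Set V := fun c => {v | ∃ p : G.Walk c v, ∀ w ∈ p.support, w ∉ S₀} with hR
    have hRstart : ∀ c : V, c ∉ S₀ → c ∈ R c := by
      intro c hc
      exact ⟨Walk.nil, by simp [hc]⟩
    have hRnotS : ∀ c v : V, v ∈ R c → v ∉ S₀ := by
      rintro c v ⟨p, hp⟩
      exact hp v p.end_mem_support
    have hRclosed : ∀ c v, v ∈ R c → ∀ u, G.Adj v u → u ∉ S₀ → u ∈ R c := by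
      rintro c v ⟨p, hp⟩ u hadj hu
      refine ⟨p.concat hadj, ?_⟩
      intro w hw
      rw [Walk.support_concat, List.mem_append] at hw
      rcases hw with hw | hw
      · exact hp w hw
      · rw [List.mem_singleton] at hw
        subst hw
        exact hu
    have hRsupp : ∀ (c v : V) (p : G.Walk c v), (∀ w ∈ p.support, w ∉ S₀) →
        ∀ w ∈ p.support, w ∈ R c := by
      intro c v p hp w hw
      exact ⟨p.takeUntil w hw, fun z hz => hp z (Walk.support_takeUntil_subset p hw hz)⟩
    have hAB' : ∀ v, v ∈ R a → v ∈ R b → False := by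
      rintro v ⟨p, hp⟩ ⟨q, hq⟩
      refine hSsep ⟨p.append q.reverse, ?_⟩
      intro w hw
      rw [Walk.mem_support_append_iff] at hw
      rcases hw with hw | hw
      · exact hp w hw
      · rw [Walk.support_reverse, List.mem_reverse] at hw
        exact hq w hw
    have hbRa : b ∉ R a := by
      rintro ⟨p, hp⟩
      exact hSsep ⟨p, hp⟩
    have haRb : a ∉ R b := by
      rintro ⟨p, hp⟩
      refine hSsep ⟨p.reverse, ?_⟩
      intro w hw
      rw [Walk.support_reverse, List.mem_reverse] at hw
      exact hp w hw
    -- every separator vertex has neighbours on both sides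
    have extract : ∀ (c e s' : V) (p : G.Walk c e), s' ∈ S₀ → c ∉ S₀ →
        (∀ w ∈ p.support, w ∉ S₀.erase s') → s' ∈ p.support →
        ∃ d, d ∈ R c ∧ G.Adj s' d := by
      intro c e s' p hs' hc hp hsp
      have hcs : c ≠ s' := fun h => hc (h ▸ hs')
      have hqav : ∀ w ∈ (p.takeUntil s' hsp).support, w ∉ S₀.erase s' :=
        fun w hw => hp w (Walk.support_takeUntil_subset p hsp hw)
      have hcount : (p.takeUntil s' hsp).support.count s' = 1 :=
        p.count_support_takeUntil_eq_one hsp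
      obtain ⟨d, hadj, q', hq'⟩ :=
        Walk.exists_eq_cons_of_ne (Ne.symm hcs) (p.takeUntil s' hsp).reverse
      have hsup : (p.takeUntil s' hsp).reverse.support = s' :: q'.support := by
        rw [hq', Walk.support_cons]
      have hnotm : s' ∉ q'.support := by
        have hrev : (p.takeUntil s' hsp).reverse.support.count s' = 1 := by
          rw [Walk.support_reverse, List.count_reverse]
          exact hcount
        rw [hsup, List.count_cons_self] at hrev
        intro hmem
        have h0 : q'.support.count s' = 0 := by omega
        exact (List.count_eq_zero.1 h0) hmem
      refine ⟨d, ⟨q'.reverse, ?_⟩, hadj⟩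
      intro w hw
      rw [Walk.support_reverse, List.mem_reverse] at hw
      have hw' : w ∈ (p.takeUntil s' hsp).reverse.support := by
        rw [hsup]
        exact List.mem_cons_of_mem _ hw
      rw [Walk.support_reverse, List.mem_reverse] at hw'
      have hne : w ≠ s' := fun h => hnotm (h ▸ hw)
      intro hwS
      exact hqav w hw' (Finset.mem_erase.2 ⟨hne, hwS⟩)
    have hnbr : ∀ s' ∈ S₀, (∃ d, d ∈ R a ∧ G.Adj s' d) ∧ (∃ d, d ∈ R b ∧ G.Adj s' d) := by
      intro s' hs'
      have hnot : ¬ Sep (S₀.erase s') := by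
        intro hsep'
        have hle : (S₀.erase s' : Finset V) ≤ S₀ := Finset.erase_subset s' S₀
        have heq := hS₀min (S₀.erase s') hsep' hle
        exact (Finset.notMem_erase s' S₀) (heq ▸ hs')
      have hex : ∃ p : G.Walk a b, ∀ w ∈ p.support, w ∉ S₀.erase s' := by
        by_contra hC
        exact hnot ⟨fun h => hSa (Finset.mem_of_mem_erase h),
          fun h => hSb (Finset.mem_of_mem_erase h), hC⟩
      obtain ⟨p, hp⟩ := hex
      have hsmem : s' ∈ p.support := by
        by_contra hsmem
        refine hSsep ⟨p, fun w hw hwS => ?_⟩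
        have hws : w ≠ s' := fun h => hsmem (h ▸ hw)
        exact hp w hw (Finset.mem_erase.2 ⟨hws, hwS⟩)
      constructor
      · exact extract a b s' p hs' hSa hp hsmem
      · refine extract b a s' p.reverse hs' hSb ?_ ?_
        · intro w hw
          rw [Walk.support_reverse, List.mem_reverse] at hw
          exact hp w hw
        · rw [Walk.support_reverse, List.mem_reverse]
          exact hsmem
    -- the separator is a clique
    have hSclique : ∀ x y : V, x ∈ S₀ → y ∈ S₀ → x ≠ y → G.Adj x y := by
      intro x y hx hy hxy
      by_contra hnxy
      obtain ⟨a1, ha1R, ha1adj⟩ := (hnbr x hx).1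
      obtain ⟨a2, ha2R, ha2adj⟩ := (hnbr y hy).1
      obtain ⟨b1, hb1R, hb1adj⟩ := (hnbr x hx).2
      obtain ⟨b2, hb2R, hb2adj⟩ := (hnbr y hy).2
      have hPex : ∃ p : G.Walk x y, ∀ w ∈ p.support, w = x ∨ w = y ∨ w ∈ R a := by
        obtain ⟨p1, hp1⟩ := ha1R
        obtain ⟨p2, hp2⟩ := ha2R
        refine ⟨Walk.cons ha1adj ((p1.reverse.append p2).concat ha2adj.symm), ?_⟩
        intro w hw
        rw [Walk.support_cons, List.mem_cons] at hw
        rcases hw with rfl | hw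
        · exact Or.inl rfl
        right
        rw [Walk.support_concat, List.mem_append] at hw
        rcases hw with hw | hw
        · right
          rw [Walk.mem_support_append_iff] at hw
          rcases hw with hw | hw
          · rw [Walk.support_reverse, List.mem_reverse] at hw
            exact hRsupp a _ p1 hp1 w hw
          · exact hRsupp a _ p2 hp2 w hw
        · rw [List.mem_singleton] at hw
          exact Or.inl hw
      have hQex : ∃ q : G.Walk y x, ∀ w ∈ q.support, w = y ∨ w = x ∨ w ∈ R b := by
        obtain ⟨p1, hp1⟩ := hb2R
        obtain ⟨p2, hp2⟩ := hb1R
        refine ⟨Walk.cons hb2adj ((p1.reverse.append p2).concat hb1adj.symm), ?_⟩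
        intro w hw
        rw [Walk.support_cons, List.mem_cons] at hw
        rcases hw with rfl | hw
        · exact Or.inl rfl
        right
        rw [Walk.support_concat, List.mem_append] at hw
        rcases hw with hw | hw
        · right
          rw [Walk.mem_support_append_iff] at hw
          rcases hw with hw | hw
          · rw [Walk.support_reverse, List.mem_reverse] at hw
            exact hRsupp b _ p1 hp1 w hw
          · exact hRsupp b _ p2 hp2 w hw
        · rw [List.mem_singleton] at hw
          exact Or.inl hw
      obtain ⟨p, hpP, hpinj, hpchord⟩ := exists_min_walk
        (fun p : G.Walk x y => ∀ w ∈ p.support, w = x ∨ w = y ∨ w ∈ R a)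
        (fun p q hp hsub _ => fun w hw => hp w (hsub w hw)) hPex
      obtain ⟨q, hqP, hqinj, hqchord⟩ := exists_min_walk
        (fun q : G.Walk y x => ∀ w ∈ q.support, w = y ∨ w = x ∨ w ∈ R b)
        (fun p q hp hsub _ => fun w hw => hp w (hsub w hw)) hQex
      have hplen2 : 2 ≤ p.length := by
        rcases Nat.lt_or_ge p.length 2 with h | h
        · exfalso
          rcases Nat.eq_zero_or_pos p.length with h0 | h0
          · exact hxy (Walk.exists_length_eq_zero_iff.1 ⟨p, h0⟩)
          · have hadj1 : G.Adj x (p.getVert 1) := by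
              have := p.adj_getVert_succ (i := 0) h0
              rwa [Walk.getVert_zero] at this
            have h1 : p.getVert 1 = y := by
              rw [show (1 : ℕ) = p.length by omega, Walk.getVert_length]
            rw [h1] at hadj1
            exact hnxy hadj1
        · exact h
      have hqlen2 : 2 ≤ q.length := by
        rcases Nat.lt_or_ge q.length 2 with h | h
        · exfalso
          rcases Nat.eq_zero_or_pos q.length with h0 | h0
          · exact hxy (Walk.exists_length_eq_zero_iff.1 ⟨q, h0⟩).symm
          · have hadj1 : G.Adj y (q.getVert 1) := by
              have := q.adj_getVert_succ (i := 0) h0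
              rwa [Walk.getVert_zero] at this
            have h1 : q.getVert 1 = x := by
              rw [show (1 : ℕ) = q.length by omega, Walk.getVert_length]
            rw [h1] at hadj1
            exact hnxy hadj1.symm
        · exact h
      have hpint : ∀ k : ℕ, 0 < k → k < p.length → p.getVert k ∈ R a := by
        intro k h1 h2
        rcases hpP _ (Walk.mem_support_iff_exists_getVert.2 ⟨k, rfl, by omega⟩)
          with h | h | h
        · exact absurd h (by
            intro hh
            exact hpinj 0 k h1 (by omega) (by rw [Walk.getVert_zero, hh]))
        · exact absurd h (by
            intro hh
            exact hpinj k p.length h2 le_rfl (by rw [Walk.getVert_length, hh]))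
        · exact h
      have hqint : ∀ k : ℕ, 0 < k → k < q.length → q.getVert k ∈ R b := by
        intro k h1 h2
        rcases hqP _ (Walk.mem_support_iff_exists_getVert.2 ⟨k, rfl, by omega⟩)
          with h | h | h
        · exact absurd h (by
            intro hh
            exact hqinj 0 k h1 (by omega) (by rw [Walk.getVert_zero, hh]))
        · exact absurd h (by
            intro hh
            exact hqinj k q.length h2 le_rfl (by rw [Walk.getVert_length, hh]))
        · exact h
      have hsepAB : ∀ u v, u ∈ R a → v ∈ R b → ¬ G.Adj u v := by
        intro u v hu hv hadj
        have hvS : v ∉ S₀ := hRnotS b v hv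
        exact hAB' v (hRclosed a u hu v hadj hvS) hv
      exact absurd hch (cycle_assembly hAB' hsepAB p q hpinj hqinj hpchord hqchord
        hpint hqint hplen2 hqlen2)
    -- one simplicial vertex on each side
    have hside : ∀ (C : Set V) (v0 z0 : V), v0 ∈ C → z0 ∉ C → z0 ∉ S₀ →
        (∀ v ∈ C, v ∉ S₀) → (∀ v ∈ C, ∀ u, G.Adj v u → u ∉ S₀ → u ∈ C) →
        ∃ z, z ∈ C ∧ Simpl G z := by
      intro C v0 z0 hv0 hz0C hz0S hCnotS hCclosed
      haveI : Fintype ↥(C ∪ ↑S₀) := Fintype.ofFinite _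
      have hcardlt : Fintype.card ↥(C ∪ ↑S₀) < Fintype.card V := by
        apply Fintype.card_lt_of_injective_of_notMem Subtype.val Subtype.val_injective
          (b := z0)
        rw [Subtype.range_coe_subtype]
        intro h
        rcases h with h | h
        · exact hz0C h
        · exact hz0S h
      have hch1 : IsChordal (G.induce (C ∪ ↑S₀)) := IsChordal.induce hch _
      have htrans : ∀ (w : ↥(C ∪ ↑S₀)), (w : V) ∈ C →
          Simpl (G.induce (C ∪ ↑S₀)) w → Simpl G (w : V) := by
        intro w hwC hw c d hc hd
        have hcm : c ∈ C ∪ ↑S₀ := by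
          by_cases h : c ∈ S₀
          · exact Or.inr h
          · exact Or.inl (hCclosed w hwC c hc h)
        have hdm : d ∈ C ∪ ↑S₀ := by
          by_cases h : d ∈ S₀
          · exact Or.inr h
          · exact Or.inl (hCclosed w hwC d hd h)
        have h1 : (G.induce (C ∪ ↑S₀)).Adj w ⟨c, hcm⟩ :=
          (Embedding.induce _).map_rel_iff.1 hc
        have h2 : (G.induce (C ∪ ↑S₀)).Adj w ⟨d, hdm⟩ :=
          (Embedding.induce _).map_rel_iff.1 hd
        rcases hw _ _ h1 h2 with h | h
        · exact Or.inl (congrArg Subtype.val h)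
        · exact Or.inr ((Embedding.induce _).map_rel_iff.2 h)
      by_cases hcomp : ∀ (u w : ↥(C ∪ ↑S₀)), u ≠ w → (G.induce (C ∪ ↑S₀)).Adj u w
      · refine ⟨v0, hv0, htrans ⟨v0, Or.inl hv0⟩ hv0 ?_⟩
        intro c d h1 h2
        by_cases h : c = d
        · exact Or.inl h
        · exact Or.inr (hcomp c d h)
      · push_neg at hcomp
        obtain ⟨u, w, huw, hnuw⟩ := hcomp
        obtain ⟨x1, y1, hx1, hy1, hxy1, hnxy1⟩ := ih ↥(C ∪ ↑S₀) (G.induce (C ∪ ↑S₀))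
          (by omega) hch1 u w huw hnuw
        have hpick : (x1 : V) ∈ C ∨ (y1 : V) ∈ C := by
          by_contra hno
          push_neg at hno
          have hx1S : (x1 : V) ∈ S₀ := by
            rcases x1.2 with h | h
            · exact absurd h hno.1
            · exact h
          have hy1S : (y1 : V) ∈ S₀ := by
            rcases y1.2 with h | h
            · exact absurd h hno.2
            · exact h
          have hadj : G.Adj ↑x1 ↑y1 :=
            hSclique _ _ hx1S hy1S (fun h => hxy1 (Subtype.ext h))
          exact hnxy1 ((Embedding.induce _).map_rel_iff.1 hadj)
        rcases hpick with h | h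
        · exact ⟨x1, h, htrans x1 h hx1⟩
        · exact ⟨y1, h, htrans y1 h hy1⟩
    obtain ⟨xA, hxAC, hxAsimp⟩ := hside (R a) a b (hRstart a hSa) hbRa hSb
      (hRnotS a) (hRclosed a)
    obtain ⟨yB, hyBC, hyBsimp⟩ := hside (R b) b a (hRstart b hSb) haRb hSa
      (hRnotS b) (hRclosed b)
    refine ⟨xA, yB, hxAsimp, hyBsimp, ?_, ?_⟩
    · intro h
      exact hAB' xA hxAC (h ▸ hyBC)
    · intro h
      exact hAB' yB (hRclosed a xA hxAC yB h (hRnotS b yB hyBC)) hyBC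

lemma exists_simplicial {V : Type} [Fintype V] {G : SimpleGraph V} (hch : IsChordal G)
    (hne : Nonempty V) : ∃ v, Simpl G v := by
  classical
  by_cases hcomp : ∀ u w : V, u ≠ w → G.Adj u w
  · obtain ⟨v⟩ := hne
    refine ⟨v, fun c d h1 h2 => ?_⟩
    by_cases h : c = d
    · exact Or.inl h
    · exact Or.inr (hcomp c d h)
  · push_neg at hcomp
    obtain ⟨u, w, huw, hnuw⟩ := hcomp
    obtain ⟨x, y, hx, _, _, _⟩ :=
      exists_two_simplicial (Fintype.card V) V G le_rfl hch u w huw hnuw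
    exact ⟨x, hx⟩






lemma exists_peo : ∀ (n : ℕ) (V : Type) [Fintype V] (G : SimpleGraph V),
    Fintype.card V ≤ n → IsChordal G →
    ∃ r : V → ℕ, Function.Injective r ∧
      ∀ u v w, G.Adj u v → G.Adj u w → r u < r v → r u < r w → v = w ∨ G.Adj v w := by
  intro n
  induction n with
  | zero =>
    intro V _ G hcard _
    haveI : IsEmpty V := Fintype.card_eq_zero_iff.1 (le_antisymm hcard (Nat.zero_le _))
    exact ⟨fun v => 0, fun a => isEmptyElim a, fun u => isEmptyElim u⟩
  | succ n ih =>
    intro V _ G hcard hch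
    classical
    cases isEmpty_or_nonempty V with
    | inl h => exact ⟨fun _ => 0, fun a => isEmptyElim a, fun u => isEmptyElim u⟩
    | inr h =>
      obtain ⟨v, hv⟩ := exists_simplicial hch h
      have hcard' : Fintype.card ({v}ᶜ : Set V) ≤ n := by
        have hlt : Fintype.card ({v}ᶜ : Set V) < Fintype.card V := by
          apply Fintype.card_lt_of_injective_of_notMem Subtype.val Subtype.val_injective
            (b := v)
          rw [Subtype.range_coe_subtype]
          simp
        omega
      obtain ⟨r', hr'inj, hr'peo⟩ := ih ({v}ᶜ : Set V) (G.induce _) hcard'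
        (IsChordal.induce hch _)
      refine ⟨fun u => if h : u = v then 0 else r' ⟨u, h⟩ + 1, ?_, ?_⟩
      · intro a b hab
        dsimp only at hab
        by_cases ha : a = v <;> by_cases hb : b = v
        · rw [ha, hb]
        · rw [dif_pos ha, dif_neg hb] at hab
          omega
        · rw [dif_neg ha, dif_pos hb] at hab
          omega
        · rw [dif_neg ha, dif_neg hb] at hab
          have he : r' ⟨a, ha⟩ = r' ⟨b, hb⟩ := by omega
          exact congrArg Subtype.val (hr'inj he)
      · intro u w1 w2 h1 h2 hl1 hl2
        dsimp only at hl1 hl2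
        by_cases hu : u = v
        · subst hu
          exact hv w1 w2 h1 h2
        · have hw1 : w1 ≠ v := by
            intro he
            rw [dif_neg hu, he, dif_pos rfl] at hl1
            omega
          have hw2 : w2 ≠ v := by
            intro he
            rw [dif_neg hu, he, dif_pos rfl] at hl2
            omega
          rw [dif_neg hu, dif_neg hw1] at hl1
          rw [dif_neg hu, dif_neg hw2] at hl2
          have hA1 : (G.induce ({v}ᶜ : Set V)).Adj ⟨u, hu⟩ ⟨w1, hw1⟩ :=
            (Embedding.induce _).map_rel_iff.1 h1
          have hA2 : (G.induce ({v}ᶜ : Set V)).Adj ⟨u, hu⟩ ⟨w2, hw2⟩ :=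
            (Embedding.induce _).map_rel_iff.1 h2
          rcases hr'peo ⟨u, hu⟩ ⟨w1, hw1⟩ ⟨w2, hw2⟩ hA1 hA2 (by omega) (by omega) with h | h
          · exact Or.inl (congrArg Subtype.val h)
          · exact Or.inr ((Embedding.induce _).map_rel_iff.2 h)



section Decomp

variable {V : Type} [Fintype V] {G : SimpleGraph V}



lemma decomposition_of_peo (r : V → ℕ) (hr : Function.Injective r)
    (hpeo : ∀ u v w, G.Adj u v → G.Adj u w → r u < r v → r u < r w → v = w ∨ G.Adj v w)
    (hne : Nonempty V) :
    ∃ (T : SimpleGraph V) (bags : V → Set V),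
      IsTreeDecomposition G T bags ∧ ∀ i, G.IsClique (bags i) := by
  classical
  obtain ⟨top, -, htop⟩ := Finset.exists_max_image Finset.univ r ⟨hne.some, Finset.mem_univ _⟩
  have htop' : ∀ u : V, r u ≤ r top := fun u => htop u (Finset.mem_univ u)
  have hch : ∀ u : V, ∃ p : V,
      ((∃ w, G.Adj u w ∧ r u < r w) → (G.Adj u p ∧ r u < r p ∧
        ∀ w, G.Adj u w → r u < r w → r p ≤ r w)) ∧
      ((¬ ∃ w, G.Adj u w ∧ r u < r w) → p = top) := by
    intro u
    by_cases h : ∃ w, G.Adj u w ∧ r u < r w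
    · obtain ⟨p, hp, hmin⟩ := Finset.exists_min_image
        (Finset.univ.filter fun w => G.Adj u w ∧ r u < r w) r
        (by obtain ⟨w, hw⟩ := h; exact ⟨w, by simp [hw.1, hw.2]⟩)
      simp only [Finset.mem_filter, Finset.mem_univ, true_and] at hp hmin
      exact ⟨p, fun _ => ⟨hp.1, hp.2, fun w h1 h2 => hmin w ⟨h1, h2⟩⟩, fun h' => absurd h h'⟩
    · exact ⟨top, fun h' => absurd h' h, fun _ => rfl⟩
  choose nxt hnxt1 hnxt2 using hch
  have hlt : ∀ u : V, u ≠ top → r u < r (nxt u) := by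
    intro u hu
    by_cases h : ∃ w, G.Adj u w ∧ r u < r w
    · exact ((hnxt1 u) h).2.1
    · rw [hnxt2 u h]
      exact lt_of_le_of_ne (htop' u) (fun he => hu (hr he))
  set T : SimpleGraph V := SimpleGraph.fromRel (fun a b => a ≠ top ∧ nxt a = b) with hT
  have hTadj : ∀ u, u ≠ top → T.Adj u (nxt u) := by
    intro u hu
    rw [hT, fromRel_adj]
    refine ⟨fun he => ?_, Or.inl ⟨hu, rfl⟩⟩
    have := hlt u hu
    rw [← he] at this
    exact lt_irrefl _ this
  have hTadj' : ∀ u w, T.Adj u w → (u ≠ top ∧ nxt u = w) ∨ (w ≠ top ∧ nxt w = u) := by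
    intro u w h
    rw [hT, fromRel_adj] at h
    exact h.2
  have hreach : ∀ (k : ℕ) (u : V), r top - r u ≤ k → T.Reachable u top := by
    intro k
    induction k with
    | zero =>
      intro u hu
      have h0 : u = top := hr (le_antisymm (htop' u) (by omega))
      exact h0 ▸ Reachable.refl u
    | succ k ih =>
      intro u hu
      by_cases h : u = top
      · exact h ▸ Reachable.refl _
      · have h1 := hlt u h
        have h2 := htop' (nxt u)
        exact (hTadj u h).reachable.trans (ih (nxt u) (by omega))
  have hconn : T.Connected := by
    rw [connected_iff]
    exact ⟨fun u w => (hreach _ u le_rfl).trans (hreach _ w le_rfl).symm, hne⟩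
  -- acyclicity
  have hacyc : T.IsAcyclic := by
    intro a c hc
    obtain ⟨u, hu, humin⟩ := Finset.exists_min_image c.support.toFinset r
      ⟨a, by simp⟩
    rw [List.mem_toFinset] at hu
    have hmin : ∀ w ∈ c.support, r u ≤ r w := fun w hw => humin w (List.mem_toFinset.2 hw)
    have hc' : (c.rotate u hu).IsCycle := hc.rotate hu
    have hsub : ∀ w ∈ (c.rotate u hu).support, w ∈ c.support := by
      intro w hw
      rw [Walk.rotate, Walk.mem_support_append_iff] at hw
      rcases hw with hw | hw
      · exact Walk.support_dropUntil_subset _ _ hw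
      · exact Walk.support_takeUntil_subset _ _ hw
    obtain ⟨v1, hadj1, q, hq⟩ := (Walk.not_nil_iff).1 hc'.not_nil
    have hqpath : q.IsPath ∧ s(u, v1) ∉ q.edges := by
      rw [hq, Walk.cons_isCycle_iff] at hc'
      exact hc'
    have hlen : 2 ≤ q.length := by
      have h3 := hc'.three_le_length
      rw [hq, Walk.length_cons] at h3
      omega
    set w1 := q.getVert (q.length - 1) with hw1
    have hadj2 : T.Adj w1 u := by
      have := q.adj_getVert_succ (i := q.length - 1) (by omega)
      rw [show q.length - 1 + 1 = q.length by omega, Walk.getVert_length] at this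
      exact this
    have hv1w1 : v1 ≠ w1 := by
      intro h
      have : (0 : ℕ) = q.length - 1 := path_getVert_inj hqpath.1 (by omega) (by omega)
        (by rw [Walk.getVert_zero]; exact h)
      omega
    have hv1mem : v1 ∈ c.support := hsub v1 (by rw [hq]; simp)
    have hw1mem : w1 ∈ c.support := by
      apply hsub
      rw [hq, Walk.support_cons]
      exact List.mem_cons_of_mem _
        (Walk.mem_support_iff_exists_getVert.2 ⟨q.length - 1, rfl, by omega⟩)
    have h1 : nxt u = v1 := by
      rcases hTadj' u v1 hadj1 with h | h
      · exact h.2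
      · have := hlt v1 h.1
        rw [h.2] at this
        exact absurd this (not_lt.2 (hmin v1 hv1mem))
    have h2 : nxt u = w1 := by
      rcases hTadj' w1 u hadj2 with h | h
      · have := hlt w1 h.1
        rw [h.2] at this
        exact absurd this (not_lt.2 (hmin w1 hw1mem))
      · exact h.2
    exact hv1w1 (h1.symm.trans h2)
  have htree : T.IsTree := ⟨hconn, hacyc⟩
  set bags : V → Set V := fun v => insert v {u | G.Adj v u ∧ r v < r u} with hbags
  have hmem_iff : ∀ i v : V, v ∈ bags i ↔ (v = i ∨ (G.Adj i v ∧ r i < r v)) := by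
    intro i v
    simp [hbags]
  refine ⟨T, bags, ⟨htree, ?_, ?_, ?_⟩, ?_⟩
  · exact fun v => ⟨v, by simp [hbags]⟩
  · intro u w hadj
    rcases lt_trichotomy (r u) (r w) with h | h | h
    · exact ⟨u, by simp [hbags], by simp [hbags, hadj, h]⟩
    · exact absurd (hr h) hadj.ne
    · exact ⟨w, by simp [hbags, hadj.symm, h], by simp [hbags]⟩
  · -- support connectivity
    intro v
    have hvSv : v ∈ {i | v ∈ bags i} := by
      show v ∈ bags v
      simp [hbags]
    have key : ∀ (k : ℕ) (u : V) (hu : u ∈ {i | v ∈ bags i}), r v - r u ≤ k →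
        (T.induce {i | v ∈ bags i}).Reachable ⟨u, hu⟩ ⟨v, hvSv⟩ := by
      intro k
      induction k with
      | zero =>
        intro u hu hk
        rcases (hmem_iff u v).1 hu with h | h
        · have he : (⟨u, hu⟩ : {i | v ∈ bags i}) = ⟨v, hvSv⟩ := Subtype.ext h.symm
          rw [he]
        · exact absurd h.2 (by omega)
      | succ k ih =>
        intro u hu hk
        by_cases huv : u = v
        · have he : (⟨u, hu⟩ : {i | v ∈ bags i}) = ⟨v, hvSv⟩ := Subtype.ext huv
          rw [he]
        · have hadj : G.Adj u v ∧ r u < r v := by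
            rcases (hmem_iff u v).1 hu with h | h
            · exact absurd h.symm huv
            · exact h
          have hutop : u ≠ top := by
            intro he
            rw [he] at hadj
            have := htop' v
            omega
          obtain ⟨hadjp, hltp, hminp⟩ := hnxt1 u ⟨v, hadj.1, hadj.2⟩
          have hple : r (nxt u) ≤ r v := hminp v hadj.1 hadj.2
          have hpSv : nxt u ∈ {i | v ∈ bags i} := by
            show v ∈ bags (nxt u)
            rw [hmem_iff]
            by_cases hpv : nxt u = v
            · exact Or.inl hpv.symm
            · refine Or.inr ⟨?_, lt_of_le_of_ne hple (fun h => hpv (hr h))⟩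
              rcases hpeo u (nxt u) v hadjp hadj.1 hltp hadj.2 with h | h
              · exact absurd h hpv
              · exact h
          have hIA : (T.induce {i | v ∈ bags i}).Adj ⟨u, hu⟩ ⟨nxt u, hpSv⟩ :=
            (Embedding.induce _).map_rel_iff.1 (hTadj u hutop)
          exact hIA.reachable.trans (ih (nxt u) hpSv (by omega))
    rw [connected_iff]
    refine ⟨fun x y => ?_, ⟨⟨v, hvSv⟩⟩⟩
    obtain ⟨x, hx⟩ := x
    obtain ⟨y, hy⟩ := y
    exact (key _ x hx le_rfl).trans (key _ y hy le_rfl).symm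
  · -- cliques
    intro i x hx y hy hne'
    rcases (hmem_iff i x).1 hx with h1 | h1 <;> rcases (hmem_iff i y).1 hy with h2 | h2
    · exact absurd (h1.trans h2.symm) hne'
    · rw [h1]
      exact h2.1
    · rw [h2]
      exact h1.1.symm
    · rcases hpeo i x y h1.1 h2.1 h1.2 h2.2 with h | h
      · exact absurd h hne'
      · exact h


end Decomp


open Fin.NatCast in
lemma chordal_of_decomposition {V ι : Type} {G : SimpleGraph V} (T : SimpleGraph ι)
    (bags : ι → Set V) (hdec : IsTreeDecomposition G T bags)
    (hclique : ∀ i, G.IsClique (bags i)) : IsChordal G := by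
  intro n hn
  haveI : NeZero n := ⟨by omega⟩
  constructor
  intro f
  classical
  obtain ⟨htree, hv, he, hsupp⟩ := hdec
  set S : Fin n → Set ι := fun k => {i | f k ∈ bags i} with hS
  have hcast : ∀ a : ℕ, ((a : Fin n) + 1) = ((a + 1 : ℕ) : Fin n) := by
    intro a
    push_cast
    ring
  have hcons : ∀ k : ℕ, ∃ i, i ∈ S (k : Fin n) ∧ i ∈ S ((k + 1 : ℕ) : Fin n) := by
    intro k
    have hadj : (cycleGraph n).Adj (k : Fin n) ((k : Fin n) + 1) := by
      rw [cycleGraph_adj_iff hn]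
      exact Or.inl rfl
    obtain ⟨i, h1, h2⟩ := he _ _ (f.map_rel_iff.2 hadj)
    refine ⟨i, h1, ?_⟩
    rw [← hcast k]
    exact h2
  have hdisj : ∀ k m : Fin n, ¬ (cycleGraph n).Adj k m → k ≠ m →
      ∀ i, i ∈ S k → i ∈ S m → False := by
    intro k m hnadj hkm i h1 h2
    have hA : G.Adj (f k) (f m) := hclique i h1 h2 (fun hfe => hkm (f.injective hfe))
    exact hnadj (f.map_rel_iff.1 hA)
  -- generic disjointness of bags for "far apart" natural indices
  have hpair : ∀ a b : ℕ, a + 1 < b → b ≤ n → b < a + n - 1 →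
      ∀ i, i ∈ S (a : Fin n) → i ∈ S (b : Fin n) → False := by
    intro a b hab hbn hbn2 i h1 h2
    have ha : a < n := by omega
    have hamod : a % n = a := Nat.mod_eq_of_lt ha
    have ha1mod : (a + 1) % n = a + 1 := Nat.mod_eq_of_lt (by omega)
    have hbmod : b % n = b ∨ (b = n ∧ b % n = 0) := by
      rcases Nat.lt_or_ge b n with h | h
      · exact Or.inl (Nat.mod_eq_of_lt h)
      · have hbe : b = n := by omega
        exact Or.inr ⟨hbe, by rw [hbe, Nat.mod_self]⟩
    have hb1mod : (b + 1) % n = b + 1 ∨ ((b + 1) % n = 0 ∧ b + 1 = n) ∨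
        ((b + 1) % n = 1 ∧ b = n) := by
      rcases Nat.lt_or_ge (b + 1) n with h | h
      · exact Or.inl (Nat.mod_eq_of_lt h)
      · rcases Nat.lt_or_ge b n with h' | h'
        · have hbe : b + 1 = n := by omega
          exact Or.inr (Or.inl ⟨by rw [hbe, Nat.mod_self], hbe⟩)
        · have hbe : b = n := by omega
          refine Or.inr (Or.inr ⟨?_, hbe⟩)
          rw [hbe, Nat.add_mod_left n 1]
          exact Nat.mod_eq_of_lt (by omega)
    refine hdisj (a : Fin n) (b : Fin n) ?_ ?_ i h1 h2
    · rw [cycleGraph_adj_iff hn]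
      rintro (hE | hE)
      · rw [hcast a] at hE
        have hvv : b % n = (a + 1) % n := congrArg Fin.val hE
        rw [ha1mod] at hvv
        rcases hbmod with h | ⟨h, h'⟩
        · rw [h] at hvv
          omega
        · rw [h'] at hvv
          omega
      · rw [hcast b] at hE
        have hvv : a % n = (b + 1) % n := congrArg Fin.val hE
        rw [hamod] at hvv
        rcases hb1mod with h | ⟨h, h'⟩ | ⟨h, h'⟩
        · rw [h] at hvv
          omega
        · rw [h] at hvv
          omega
        · rw [h] at hvv
          omega
    · intro hE
      have hvv : a % n = b % n := congrArg Fin.val hE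
      rw [hamod] at hvv
      rcases hbmod with h | ⟨h, h'⟩
      · rw [h] at hvv
        omega
      · rw [h'] at hvv
        omega
  -- choose elements
  obtain ⟨i01, hi01a, hi01b⟩ := hcons 0
  obtain ⟨i12, hi12a, hi12b⟩ := hcons 1
  obtain ⟨i23, hi23a, hi23b⟩ := hcons 2
  have h13 : ∀ i, i ∈ S ((1 : ℕ) : Fin n) → i ∈ S ((3 : ℕ) : Fin n) → False :=
    hpair 1 3 (by omega) (by omega) (by omega)
  have hn2 : ((1 + 1 : ℕ) : Fin n) = ((2 : ℕ) : Fin n) := by norm_num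
  have hn3 : ((2 + 1 : ℕ) : Fin n) = ((3 : ℕ) : Fin n) := by norm_num
  rw [hn2] at hi12b
  rw [hn3] at hi23b
  -- path from i12 (in S 1) to i23 (in S 3)
  have hi23nS1 : i23 ∉ S ((1 : ℕ) : Fin n) := fun h => h13 i23 h hi23b
  obtain ⟨p0⟩ : T.Reachable i12 i23 := htree.isConnected.preconnected i12 i23
  -- find crossing edge out of S 1
  have hfind : ∀ (u w : ι) (p : T.Walk u w), p.IsPath → u ∈ S ((1 : ℕ) : Fin n) →
      w ∉ S ((1 : ℕ) : Fin n) →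
      ∃ x y, T.Adj x y ∧ x ∈ S ((1 : ℕ) : Fin n) ∧ y ∉ S ((1 : ℕ) : Fin n) ∧
        ∃ q : T.Walk y w, s(x, y) ∉ q.edges := by
    intro u w p
    induction p with
    | nil => exact fun _ hu hw => absurd hu hw
    | @cons u z w hadj q ih =>
      intro hp hu hw
      by_cases hz : z ∈ S ((1 : ℕ) : Fin n)
      · exact ih hp.of_cons hz hw
      · refine ⟨u, z, hadj, hu, hz, q, fun hmem => ?_⟩
        exact ((Walk.cons_isPath_iff hadj q).1 hp).2
          (Walk.fst_mem_support_of_mem_edges q hmem)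
  obtain ⟨x, y, hxy, hxS1, hyS1, qy, hqy⟩ :=
    hfind i12 i23 (p0.toPath : T.Path i12 i23).1 (p0.toPath).2 hi12a hi23nS1
  set T' : SimpleGraph ι := T \ fromEdgeSet {s(x, y)} with hT'
  have hbr : ¬ T'.Reachable x y := by
    have := (isAcyclic_iff_forall_adj_isBridge.1 htree.IsAcyclic) hxy
    rw [isBridge_iff] at this
    exact this
  have hlift : ∀ (u w : ι) (q : T.Walk u w), s(x, y) ∉ q.edges → T'.Reachable u w := by
    intro u w q hq
    refine ⟨q.transfer T' fun e ep => ?_⟩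
    rw [hT']
    simp only [edgeSet_sdiff, edgeSet_fromEdgeSet, edgeSet_sdiff_sdiff_isDiag, Set.mem_diff,
      Set.mem_singleton_iff]
    exact ⟨q.edges_subset_edgeSet ep, fun h' => hq (h' ▸ ep)⟩
  -- the key crossing lemma
  have hcross : ∀ (k : Fin n) (u w : ι), u ∈ S k → w ∈ S k → T'.Reachable x u →
      ¬ T'.Reachable x w → x ∈ S k ∧ y ∈ S k := by
    intro k u w hu hw hru hnw
    obtain ⟨q, hqsupp⟩ : ∃ q : T.Walk u w, ∀ z ∈ q.support, z ∈ S k := by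
      obtain ⟨q0⟩ := (hsupp (f k)).preconnected ⟨u, hu⟩ ⟨w, hw⟩
      refine ⟨q0.map (Embedding.induce (S k)).toHom, ?_⟩
      intro z hz
      have hz : z ∈ (q0.map (Embedding.induce (S k)).toHom).support := hz
      rw [Walk.support_map] at hz
      obtain ⟨⟨z', hz'⟩, _, rfl⟩ := List.mem_map.1 hz
      exact hz'
    have hedge : s(x, y) ∈ q.edges := by
      by_contra hne
      exact hnw (hru.trans (hlift u w q hne))
    exact ⟨hqsupp x (Walk.fst_mem_support_of_mem_edges q hedge),
      hqsupp y (Walk.snd_mem_support_of_mem_edges q hedge)⟩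
  -- S 1 is inside the x-side
  have hS1A : ∀ z ∈ S ((1 : ℕ) : Fin n), T'.Reachable x z := by
    intro z hz
    by_contra hnr
    exact hyS1 (hcross _ x z hxS1 hz (Reachable.refl x) hnr).2
  have hu3 : ¬ T'.Reachable x i23 := by
    intro h
    exact hbr (h.trans (hlift y i23 qy hqy).symm)
  have hS3A : ∀ z ∈ S ((3 : ℕ) : Fin n), ¬ T'.Reachable x z := by
    intro z hz hr
    exact h13 x hxS1 (hcross _ z i23 hz hi23b hr hu3).1
  -- x is in S 2
  have hxS2 : x ∈ S ((2 : ℕ) : Fin n) :=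
    (hcross _ i12 i23 hi12b hi23a (hS1A i12 hi12a) (hS3A i23 hi23b)).1
  -- minimal-index search
  have hn1 : ((0 + 1 : ℕ) : Fin n) = ((1 : ℕ) : Fin n) := by norm_num
  rw [hn1] at hi01b
  set Qp : ℕ → Prop := fun j => ∃ i, i ∈ S ((3 + j : ℕ) : Fin n) ∧ T'.Reachable x i
    with hQp
  have hnn : ((3 + (n - 3) : ℕ) : Fin n) = ((0 : ℕ) : Fin n) := by
    apply Fin.ext
    show (3 + (n - 3)) % n = 0 % n
    have h3 : 3 + (n - 3) = n := by omega
    rw [h3, Nat.mod_self, Nat.zero_mod]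
  have hQn3 : Qp (n - 3) := ⟨i01, by rw [hnn]; exact hi01a, hS1A i01 hi01b⟩
  have hexQ : ∃ j, Qp j := ⟨n - 3, hQn3⟩
  have hj0le : Nat.find hexQ ≤ n - 3 := Nat.find_min' hexQ hQn3
  have hj0pos : 0 < Nat.find hexQ := by
    rcases Nat.eq_zero_or_pos (Nat.find hexQ) with h | h
    · exfalso
      have hQ0 : Qp 0 := h ▸ Nat.find_spec hexQ
      obtain ⟨i, hi, hr⟩ := hQ0
      have h30 : ((3 + 0 : ℕ) : Fin n) = ((3 : ℕ) : Fin n) := by norm_num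
      rw [h30] at hi
      exact hS3A i hi hr
    · exact h
  obtain ⟨istar, histar, hrstar⟩ := Nat.find_spec hexQ
  have hprev : ¬ Qp (Nat.find hexQ - 1) := Nat.find_min hexQ (by omega)
  obtain ⟨imid, himid1, himid2⟩ := hcons (3 + (Nat.find hexQ - 1))
  have hmid : (3 + (Nat.find hexQ - 1) + 1 : ℕ) = 3 + Nat.find hexQ := by omega
  rw [hmid] at himid2
  have himidnr : ¬ T'.Reachable x imid := fun hr => hprev ⟨imid, himid1, hr⟩
  have hxSm : x ∈ S ((3 + Nat.find hexQ : ℕ) : Fin n) :=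
    (hcross _ istar imid histar himid2 hrstar himidnr).1
  exact hpair 2 (3 + Nat.find hexQ) (by omega) (by omega) (by omega) x hxS2 hxSm


end ChordalAux

/-- Theorem 5.9 (i) ↔ (iv): a finite graph has a tree-decomposition into cliques if and
only if it is chordal. -/
theorem treeDecomposition_cliques_iff_chordal {V : Type} [Fintype V]
    (G : SimpleGraph V) :
    (∃ (ι : Type) (T : SimpleGraph ι) (bags : ι → Set V),
        IsTreeDecomposition G T bags ∧ ∀ i, G.IsClique (bags i)) ↔ IsChordal G := by
  constructor
  · rintro ⟨ι, T, bags, hdec, hcl⟩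
    exact ChordalAux.chordal_of_decomposition T bags hdec hcl
  · intro hch
    classical
    cases isEmpty_or_nonempty V with
    | inl h =>
      have htree : (⊤ : SimpleGraph PUnit).IsTree := by
        constructor
        · rw [SimpleGraph.connected_iff]
          refine ⟨fun u v => ?_, ⟨PUnit.unit⟩⟩
          rw [Subsingleton.elim u v]
        · intro v c hc
          cases c with
          | nil => simpa using hc.three_le_length
          | cons hadj q => exact hadj.ne (Subsingleton.elim _ _)
      exact ⟨PUnit, ⊤, fun _ => ∅,
        ⟨htree, fun v => isEmptyElim v, fun u v h => isEmptyElim u,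
          fun v => isEmptyElim v⟩, fun _ => SimpleGraph.isClique_empty⟩
    | inr h =>
      obtain ⟨r, hrinj, hrpeo⟩ := ChordalAux.exists_peo (Fintype.card V) V G le_rfl hch
      obtain ⟨T, bags, hdec, hcl⟩ := ChordalAux.decomposition_of_peo r hrinj hrpeo h
      exact ⟨V, T, bags, hdec, hcl⟩
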